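/- Let q ≥ 3 be a prime power, let m ≥ 2 be an integer, let n = (q^m − 1)/(q − 1), and let δ be an integer with 2 ≤ δ ≤ q^{⌊(m−1)/2⌋}. Then the set {0} ∪ ⋃_{i=1}^{δ−1} (C_i ∪ (−C_i)) ⊆ Z_n has cardinality exactly 1 + 2m⌈(δ−1)(q−1)/q⌉, where −C_i = {n − a : a ∈ C_i}. Consequently, the reversible BCH code C_{(q,n,2δ,1−δ)} of length n, whose generator polynomial has exactly the roots β^s for s in this set (β a primitive n-th root of unity in GF(q^m)), has dimension n − 1 − 2m⌈(δ−1)(q−1)/q⌉. -/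

import Mathlib

/-- The `q`-cyclotomic coset of `a` modulo `n`. -/
def cosetC (q n a : ℕ) : Set ℕ := {b | ∃ j : ℕ, b = a * q ^ j % n}

namespace RevBCH

lemma geom_sum_nat (q : ℕ) (hq : 1 ≤ q) (m : ℕ) :
    (q - 1) * ∑ j ∈ Finset.range m, q ^ j = q ^ m - 1 := by
  induction m with
  | zero => simp
  | succ m ih =>
    rw [Finset.sum_range_succ, Nat.mul_add, ih]
    have h1 : q ^ m ≤ q ^ (m+1) := Nat.pow_le_pow_right (by omega) (by omega)
    have h2 : 1 ≤ q ^ m := Nat.one_le_pow _ _ (by omega)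
    have h3 : (q - 1) * q ^ m = q ^ (m+1) - q ^ m := by
      rw [Nat.sub_mul, one_mul, pow_succ, Nat.mul_comm]
    omega

lemma n_facts (q m n : ℕ) (hq : 3 ≤ q) (hm : 2 ≤ m) (hn : n = (q ^ m - 1) / (q - 1)) :
    n = ∑ j ∈ Finset.range m, q ^ j ∧ q ^ (m-1) < n ∧ q ^ m ≡ 1 [MOD n] ∧ Nat.Coprime n q := by
  have hsum : n = ∑ j ∈ Finset.range m, q ^ j := by
    rw [hn, ← geom_sum_nat q (by omega) m, Nat.mul_div_cancel_left _ (by omega)]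
  have hlt : q ^ (m-1) < n := by
    obtain ⟨k, hk⟩ : ∃ k, m = k + 1 := ⟨m - 1, by omega⟩
    subst hk
    rw [hsum, Finset.sum_range_succ, Nat.add_sub_cancel]
    have h1 : 1 ≤ ∑ j ∈ Finset.range k, q ^ j :=
      calc (1:ℕ) = q ^ 0 := rfl
        _ ≤ ∑ j ∈ Finset.range k, q ^ j :=
          Finset.single_le_sum (f := fun j => q ^ j) (fun _ _ => Nat.zero_le _)
            (Finset.mem_range.mpr (by omega))
    omega
  have hdvd : n ∣ q ^ m - 1 := by
    refine ⟨q - 1, ?_⟩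
    rw [hsum, ← geom_sum_nat q (by omega) m]
    ring
  have hmod : q ^ m ≡ 1 [MOD n] :=
    ((Nat.modEq_iff_dvd' (Nat.one_le_pow _ _ (by omega))).mpr hdvd).symm
  have hcop : Nat.Coprime n q := by
    have hK : n = q * (∑ j ∈ Finset.range (m-1), q ^ j) + 1 := by
      rw [hsum]
      have hm1 : m = (m-1) + 1 := by omega
      rw [hm1, Finset.sum_range_succ']
      simp [Finset.mul_sum, pow_succ, mul_comm]
    rw [hK]
    simp [Nat.coprime_comm, Nat.Coprime]
  exact ⟨hsum, hlt, hmod, hcop⟩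

lemma key (q m n t : ℕ) (hq3 : 3 ≤ q) (ht : 2 * t ≤ m - 1) (hm : 1 ≤ m)
    (hn' : q ^ (m-1) < n) (hqm : q ^ m ≡ 1 [MOD n])
    {i i' j : ℕ} (hi : i < q ^ t) (hi' : i' < q ^ t)
    (hqi : ¬ q ∣ i) (hqi' : ¬ q ∣ i') (hj : j < m)
    (h : i * q ^ j ≡ i' [MOD n]) : j = 0 ∧ i = i' := by
  rcases le_or_gt j (m - 1 - t) with hcase | hcase
  · have hb : i * q ^ j < q ^ (m-1) := by
      calc i * q ^ j < q ^ t * q ^ j := by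
            exact Nat.mul_lt_mul_of_lt_of_le hi (le_refl _) (Nat.pow_pos (by omega))
        _ = q ^ (t + j) := by rw [pow_add]
        _ ≤ q ^ (m-1) := Nat.pow_le_pow_right (by omega) (by omega)
    have hi'n : i' < n :=
      lt_trans (lt_of_lt_of_le hi' (Nat.pow_le_pow_right (by omega) (by omega))) hn'
    have heq : i * q ^ j = i' := by
      have hh := h
      unfold Nat.ModEq at hh
      rw [Nat.mod_eq_of_lt (lt_trans hb hn'), Nat.mod_eq_of_lt hi'n] at hh
      exact hh
    rcases Nat.eq_zero_or_pos j with hj0 | hj0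
    · exact ⟨hj0, by simpa [hj0] using heq⟩
    · exfalso
      apply hqi'
      rw [← heq]
      exact Dvd.dvd.mul_left (dvd_pow_self q (by omega)) i
  · exfalso
    have h2 : i * q ^ j * q ^ (m - j) ≡ i' * q ^ (m - j) [MOD n] := h.mul_right _
    have h3 : i * q ^ j * q ^ (m - j) = i * q ^ m := by
      rw [mul_assoc, ← pow_add]
      congr 2
      omega
    rw [h3] at h2
    have h4 : i * q ^ m ≡ i * 1 [MOD n] := hqm.mul_left i
    have h5 : i ≡ i' * q ^ (m - j) [MOD n] := by
      calc i = i * 1 := (mul_one i).symm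
        _ ≡ i * q ^ m [MOD n] := h4.symm
        _ ≡ i' * q ^ (m-j) [MOD n] := h2
    have hb : i' * q ^ (m - j) < q ^ (m - 1) := by
      calc i' * q ^ (m-j) < q ^ t * q ^ (m-j) :=
            Nat.mul_lt_mul_of_lt_of_le hi' (le_refl _) (Nat.pow_pos (by omega))
        _ = q ^ (t + (m - j)) := by rw [pow_add]
        _ ≤ q ^ (m-1) := Nat.pow_le_pow_right (by omega) (by omega)
    have hin : i < n :=
      lt_trans (lt_of_lt_of_le hi (Nat.pow_le_pow_right (by omega) (by omega))) hn'
    have heq : i = i' * q ^ (m - j) := by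
      have hh := h5
      unfold Nat.ModEq at hh
      rw [Nat.mod_eq_of_lt hin, Nat.mod_eq_of_lt (lt_trans hb hn')] at hh
      exact hh
    apply hqi
    rw [heq]
    exact Dvd.dvd.mul_left (dvd_pow_self q (by omega)) i'

lemma crossKey (q m n t : ℕ) (hq3 : 3 ≤ q) (ht : 2 * t ≤ m - 1) (hm : 1 ≤ m)
    (hn' : q ^ (m-1) < n) (hqm : q ^ m ≡ 1 [MOD n])
    {i i' j : ℕ} (hi : i < q ^ t) (hi' : i' < q ^ t)
    (hi0 : 0 < i) (hi0' : 0 < i') (hj : j < m)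
    (h : n ∣ i * q ^ j + i') : False := by
  rcases le_or_gt j (m - 1 - t) with hcase | hcase
  · have hb2 : i * q ^ j + i' < n := by
      have h1 : i * q ^ j ≤ (q ^ t - 1) * q ^ (m-1-t) := by
        apply Nat.mul_le_mul (by omega) (Nat.pow_le_pow_right (by omega) hcase)
      have h2 : (q ^ t - 1) * q ^ (m-1-t) + q ^ t ≤ q ^ (m-1) := by
        have e : q ^ t * q ^ (m-1-t) = q ^ (m-1) := by rw [← pow_add]; congr 1; omega
        have h3 : q ^ t ≤ q ^ (m-1-t) := Nat.pow_le_pow_right (by omega) (by omega)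
        have h4 : 1 ≤ q ^ t := Nat.one_le_pow _ _ (by omega)
        calc (q ^ t - 1) * q ^ (m-1-t) + q ^ t
            ≤ (q ^ t - 1) * q ^ (m-1-t) + q ^ (m-1-t) := by omega
          _ = q ^ t * q ^ (m-1-t) := by
              have h6 := Nat.le_mul_of_pos_left (q ^ (m-1-t)) (show 0 < q ^ t by omega)
              rw [Nat.sub_mul, one_mul]; omega
          _ = q ^ (m-1) := e
      have h5 : i' < q ^ t := hi'
      linarith
    have := Nat.eq_zero_of_dvd_of_lt h hb2
    omega
  · have h2 : n ∣ (i * q ^ j + i') * q ^ (m - j) := h.mul_right _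
    have h3 : (i * q ^ j + i') * q ^ (m-j) = i * q ^ m + i' * q ^ (m-j) := by
      rw [add_mul, mul_assoc, ← pow_add]
      congr 3
      omega
    rw [h3] at h2
    have h4 : i * q ^ m + i' * q ^ (m-j) ≡ i * 1 + i' * q ^ (m-j) [MOD n] :=
      Nat.ModEq.add_right _ (hqm.mul_left i)
    have h5 : n ∣ i + i' * q ^ (m - j) := by
      have h6 : i * 1 + i' * q ^ (m-j) ≡ 0 [MOD n] := by
        calc i * 1 + i' * q ^ (m-j) ≡ i * q ^ m + i' * q ^ (m-j) [MOD n] := h4.symm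
          _ ≡ 0 [MOD n] := (Nat.modEq_zero_iff_dvd).mpr h2
      rw [mul_one] at h6
      exact Nat.modEq_zero_iff_dvd.mp h6
    have hb : i' * q ^ (m-j) < q ^ (m-1) := by
      calc i' * q ^ (m-j) < q ^ t * q ^ (m-j) :=
            Nat.mul_lt_mul_of_lt_of_le hi' (le_refl _) (Nat.pow_pos (by omega))
        _ = q ^ (t + (m - j)) := by rw [pow_add]
        _ ≤ q ^ (m-1) := Nat.pow_le_pow_right (by omega) (by omega)
    have hit : i < q ^ (m-1) := lt_of_lt_of_le hi (Nat.pow_le_pow_right (by omega) (by omega))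
    have hb2 : i + i' * q ^ (m-j) < n := by
      have h1 : i' * q ^ (m-j) ≤ (q ^ t - 1) * q ^ t := by
        apply Nat.mul_le_mul (by omega) (Nat.pow_le_pow_right (by omega) (by omega))
      have h3' : q ^ t * q ^ t ≤ q ^ (m-1) := by
        rw [← pow_add]; exact Nat.pow_le_pow_right (by omega) (by omega)
      have h4' : 1 ≤ q ^ t := Nat.one_le_pow _ _ (by omega)
      have h5' : (q ^ t - 1) * q ^ t = q ^ t * q ^ t - q ^ t := by
        rw [Nat.sub_mul, one_mul]
      omega
    have := Nat.eq_zero_of_dvd_of_lt h5 hb2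
    omega

def S (q d : ℕ) : Finset ℕ := (Finset.Icc 1 d).filter (fun i => ¬ q ∣ i)

def g (q n : ℕ) : ℕ × ℕ × Bool → ℕ :=
  fun p => if p.2.2 then p.1 * q ^ p.2.1 % n else n - p.1 * q ^ p.2.1 % n

lemma mem_S {q d i : ℕ} : i ∈ S q d ↔ (1 ≤ i ∧ i ≤ d) ∧ ¬ q ∣ i := by
  simp [S, Finset.mem_filter, Finset.mem_Icc]

lemma card_S {q d : ℕ} (hq : 0 < q) : (S q d).card = d - d / q := by
  have h := Finset.card_filter_add_card_filter_not
    (s := Finset.Icc 1 d) (p := fun i => q ∣ i)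
  have h1 : (Finset.Icc 1 d).card = d := by simp [Nat.card_Icc]
  have h2 : ((Finset.Icc 1 d).filter (fun i => q ∣ i)).card = d / q := by
    have hIoc : Finset.Icc 1 d = Finset.Ioc 0 d := by rw [← Finset.Icc_add_one_left_eq_Ioc, zero_add]
    rw [hIoc]
    exact Nat.Ioc_filter_dvd_card_eq_div d q
  have hle : d / q ≤ d := Nat.div_le_self d q
  unfold S
  omega

lemma div_arith {q d : ℕ} (hq : 3 ≤ q) : d - d / q = (d * (q - 1) + q - 1) / q := by
  have hmod := Nat.div_add_mod d q
  set a := d / q with ha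
  set r := d % q with hr
  have hrq : r < q := Nat.mod_lt d (by omega)
  have key : d * (q - 1) + q - 1 = q * (a * (q - 1) + r) + (q - 1 - r) := by
    have h1 : 1 ≤ d * (q - 1) + q := by omega
    zify [show 1 ≤ q by omega, show r ≤ q - 1 by omega, h1]
    have hd' : (d : ℤ) = q * a + r := by exact_mod_cast hmod.symm
    linear_combination ((q : ℤ) - 1) * hd'
  rw [key, Nat.mul_add_div (by omega), Nat.div_eq_of_lt (by omega)]
  have had : a ≤ d := Nat.div_le_self d q
  zify [had, show 1 ≤ q by omega]
  have hd' : (d : ℤ) = q * a + r := by exact_mod_cast hmod.symm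
  linear_combination hd'

end RevBCH

theorem reversible_BCH_dimension_projective (q m n δ : ℕ) (hq : IsPrimePow q)
    (hq3 : 3 ≤ q) (hm : 2 ≤ m) (hn : n = (q ^ m - 1) / (q - 1))
    (hδ : 2 ≤ δ) (hδ' : δ ≤ q ^ ((m - 1) / 2)) :
    ({0} ∪ ⋃ i ∈ Set.Icc 1 (δ - 1), (cosetC q n i ∪ (n - ·) '' cosetC q n i)).ncard =
      1 + 2 * m * (((δ - 1) * (q - 1) + q - 1) / q) ∧
    n - ({0} ∪ ⋃ i ∈ Set.Icc 1 (δ - 1),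
        (cosetC q n i ∪ (n - ·) '' cosetC q n i)).ncard =
      n - 1 - 2 * m * (((δ - 1) * (q - 1) + q - 1) / q) := by
  classical
  set t := (m - 1) / 2 with htdef
  set d := δ - 1 with hddef
  have ht1 : 1 ≤ t := by
    by_contra h
    have ht0 : t = 0 := by omega
    rw [ht0, pow_zero] at hδ'
    omega
  have hm3 : 3 ≤ m := by omega
  have ht2 : 2 * t ≤ m - 1 := by omega
  obtain ⟨hsum, hn', hqmod, hcop⟩ := RevBCH.n_facts q m n hq3 (by omega) hn
  have hq0 : 0 < q := by omega
  have h1qt : 1 ≤ q ^ t := Nat.one_le_pow _ _ hq0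
  have hdlt : d ≤ q ^ t - 1 := by omega
  have hiq : ∀ i ∈ RevBCH.S q d, i < q ^ t := by
    intro i hi
    have := (RevBCH.mem_S.mp hi).1.2
    omega
  have hqt_le : q ^ t ≤ q ^ (m-1) := Nat.pow_le_pow_right (by omega) (by omega)
  have hdn : d < n := by omega
  have hnpos : 0 < n := by
    have : 1 ≤ q ^ (m-1) := Nat.one_le_pow _ _ hq0
    omega
  have hpow : ∀ j : ℕ, q ^ j ≡ q ^ (j % m) [MOD n] := by
    intro j
    conv_lhs => rw [← Nat.div_add_mod j m]
    rw [pow_add, pow_mul]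
    calc (q ^ m) ^ (j / m) * q ^ (j % m)
        ≡ 1 ^ (j / m) * q ^ (j % m) [MOD n] := Nat.ModEq.mul_right _ (hqmod.pow _)
      _ = q ^ (j % m) := by rw [one_pow, one_mul]
  have hx : ∀ i ∈ RevBCH.S q d, ∀ j : ℕ, 0 < i * q ^ j % n ∧ i * q ^ j % n < n := by
    intro i hi j
    obtain ⟨⟨hi1, hid⟩, hqi⟩ := RevBCH.mem_S.mp hi
    refine ⟨?_, Nat.mod_lt _ hnpos⟩
    by_contra h0
    have h0' : i * q ^ j % n = 0 := by omega
    have hdvd : n ∣ i * q ^ j := Nat.dvd_of_mod_eq_zero h0'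
    have hni : n ∣ i := (Nat.Coprime.dvd_of_dvd_mul_right (hcop.pow_right j) hdvd)
    have := Nat.le_of_dvd (by omega) hni
    omega
  -- helper A : same-sign collisions
  have helpA : ∀ i ∈ RevBCH.S q d, ∀ i' ∈ RevBCH.S q d, ∀ j k : ℕ, j < m → k < m →
      i * q ^ j % n = i' * q ^ k % n → i = i' ∧ j = k := by
    have base : ∀ i ∈ RevBCH.S q d, ∀ i' ∈ RevBCH.S q d, ∀ j k : ℕ, j < m → k < m → k ≤ j →
        i * q ^ j ≡ i' * q ^ k [MOD n] → i = i' ∧ j = k := by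
      intro i hi i' hi' j k hj hk hkj h
      obtain ⟨⟨hi1, hid⟩, hqi⟩ := RevBCH.mem_S.mp hi
      obtain ⟨⟨hi1', hid'⟩, hqi'⟩ := RevBCH.mem_S.mp hi'
      have h2 : i * q ^ (j - k) * q ^ k ≡ i' * q ^ k [MOD n] := by
        rwa [mul_assoc, ← pow_add, Nat.sub_add_cancel hkj]
      have h3 : i * q ^ (j - k) ≡ i' [MOD n] :=
        Nat.ModEq.cancel_right_of_coprime (hcop.pow_right k) h2
      have hkey := RevBCH.key q m n t hq3 ht2 (by omega) hn' hqmod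
        (hiq i hi) (hiq i' hi') hqi hqi' (by omega) h3
      exact ⟨hkey.2, by omega⟩
    intro i hi i' hi' j k hj hk h
    rcases le_total k j with hkj | hjk
    · exact base i hi i' hi' j k hj hk hkj h
    · have hres := base i' hi' i hi k j hk hj hjk (Nat.ModEq.symm h)
      exact ⟨hres.1.symm, hres.2.symm⟩
  -- helper B : opposite-sign collisions
  have helpB : ∀ i ∈ RevBCH.S q d, ∀ i' ∈ RevBCH.S q d, ∀ j k : ℕ, j < m → k < m →
      ¬ n ∣ (i * q ^ j + i' * q ^ k) := by
    intro i hi i' hi' j k hj hk hdvd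
    obtain ⟨⟨hi1, hid⟩, hqi⟩ := RevBCH.mem_S.mp hi
    obtain ⟨⟨hi1', hid'⟩, hqi'⟩ := RevBCH.mem_S.mp hi'
    have h2 : n ∣ (i * q ^ j + i' * q ^ k) * q ^ (m - k) := hdvd.mul_right _
    have h3 : (i * q ^ j + i' * q ^ k) * q ^ (m - k)
        = i * q ^ (j + (m - k)) + i' * q ^ m := by
      rw [add_mul, mul_assoc, mul_assoc, ← pow_add, ← pow_add]
      congr 3
      omega
    rw [h3] at h2
    have h4 : i * q ^ (j + (m - k)) + i' * q ^ m
        ≡ i * q ^ ((j + (m - k)) % m) + i' * 1 [MOD n] :=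
      Nat.ModEq.add (Nat.ModEq.mul_left i (hpow _)) (Nat.ModEq.mul_left i' hqmod)
    have h5 : n ∣ i * q ^ ((j + (m - k)) % m) + i' * 1 :=
      Nat.modEq_zero_iff_dvd.mp (h4.symm.trans (Nat.modEq_zero_iff_dvd.mpr h2))
    rw [mul_one] at h5
    exact RevBCH.crossKey q m n t hq3 ht2 (by omega) hn' hqmod
      (hiq i hi) (hiq i' hi') (by omega) (by omega) (Nat.mod_lt _ (by omega)) h5
  set P : Finset (ℕ × ℕ × Bool) :=
    (RevBCH.S q d) ×ˢ Finset.range m ×ˢ (Finset.univ : Finset Bool) with hPdef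
  set T : Finset ℕ := P.image (RevBCH.g q n) with hTdef
  have hmemP : ∀ p : ℕ × ℕ × Bool, p ∈ P ↔ p.1 ∈ RevBCH.S q d ∧ p.2.1 < m := by
    intro p
    simp [hPdef, Finset.mem_product, Finset.mem_range]
  -- injectivity of g on P
  have hginj : Set.InjOn (RevBCH.g q n) ↑P := by
    rintro ⟨i, j, b⟩ hp ⟨i', k, b'⟩ hp' heq
    rw [Finset.mem_coe, hmemP] at hp hp'
    obtain ⟨hiS, hj⟩ := hp
    obtain ⟨hiS', hk⟩ := hp'
    have hxb := hx i hiS j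
    have hxb' := hx i' hiS' k
    have hsum_dvd : i * q ^ j % n + i' * q ^ k % n = n → False := by
      intro hsumn
      have hmm : i * q ^ j + i' * q ^ k ≡ i * q ^ j % n + i' * q ^ k % n [MOD n] :=
        Nat.ModEq.add (Nat.mod_modEq _ _).symm (Nat.mod_modEq _ _).symm
      have : n ∣ i * q ^ j + i' * q ^ k :=
        Nat.modEq_zero_iff_dvd.mp
          (hmm.trans (Nat.modEq_zero_iff_dvd.mpr (by rw [hsumn])))
      exact helpB i hiS i' hiS' j k hj hk this
    cases b <;> cases b' <;> simp [RevBCH.g] at heq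
    · -- false false
      have hxx : i * q ^ j % n = i' * q ^ k % n := by omega
      obtain ⟨h1, h2⟩ := helpA i hiS i' hiS' j k hj hk hxx
      simp [h1, h2]
    · -- false true : n - x = x'
      exfalso
      exact hsum_dvd (by omega)
    · -- true false : x = n - x'
      exfalso
      exact hsum_dvd (by omega)
    · -- true true
      obtain ⟨h1, h2⟩ := helpA i hiS i' hiS' j k hj hk heq
      simp [h1, h2]
  have h0T : (0:ℕ) ∉ T := by
    rw [hTdef]
    intro hmem
    obtain ⟨⟨i, j, b⟩, hpmem, hg⟩ := Finset.mem_image.mp hmem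
    rw [hmemP] at hpmem
    obtain ⟨hiS, hj⟩ := hpmem
    have hxb := hx i hiS j
    cases b <;> simp [RevBCH.g] at hg <;> omega
  -- reduction of arbitrary cosets to canonical form
  have reduce : ∀ i : ℕ, ∀ j : ℕ, 1 ≤ i → i ≤ d →
      ∃ i₀ j', i₀ ∈ RevBCH.S q d ∧ j' < m ∧ i * q ^ j % n = i₀ * q ^ j' % n := by
    intro i
    induction i using Nat.strong_induction_on with
    | _ i IH =>
      intro j hi1 hi2
      by_cases hdvd : q ∣ i
      · obtain ⟨c, hc⟩ := hdvd
        have hc1 : 1 ≤ c := by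
          rcases Nat.eq_zero_or_pos c with h0 | h0
          · rw [h0, mul_zero] at hc; omega
          · exact h0
        have hci : c < i := by nlinarith
        obtain ⟨i₀, j', hS, hj', hEq⟩ := IH c hci (j+1) hc1 (by omega)
        refine ⟨i₀, j', hS, hj', ?_⟩
        rw [← hEq, hc]
        congr 1
        ring
      · refine ⟨i, j % m, RevBCH.mem_S.mpr ⟨⟨hi1, hi2⟩, hdvd⟩, Nat.mod_lt _ (by omega), ?_⟩
        exact Nat.ModEq.mul_left i (hpow j)
  -- the set equality
  have hsetEq : ({0} ∪ ⋃ i ∈ Set.Icc 1 d, (cosetC q n i ∪ (n - ·) '' cosetC q n i))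
      = ↑(insert (0:ℕ) T) := by
    ext x
    simp only [Set.mem_union, Set.mem_singleton_iff, Set.mem_iUnion, Set.mem_Icc,
      cosetC, Set.mem_setOf_eq, Set.mem_image, Finset.coe_insert, Set.mem_insert_iff,
      Finset.mem_coe, exists_prop]
    constructor
    · rintro (rfl | ⟨i, ⟨hi1, hi2⟩, hcase⟩)
      · exact Or.inl rfl
      right
      rcases hcase with ⟨j, rfl⟩ | ⟨y, ⟨j, rfl⟩, rfl⟩
      · obtain ⟨i₀, j', hS, hj', hEq⟩ := reduce i j hi1 hi2
        rw [hEq, hTdef]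
        exact Finset.mem_image.mpr ⟨(i₀, j', true), (hmemP _).mpr ⟨hS, hj'⟩, rfl⟩
      · obtain ⟨i₀, j', hS, hj', hEq⟩ := reduce i j hi1 hi2
        rw [hEq, hTdef]
        exact Finset.mem_image.mpr ⟨(i₀, j', false), (hmemP _).mpr ⟨hS, hj'⟩, rfl⟩
    · rintro (rfl | hxT)
      · exact Or.inl rfl
      right
      rw [hTdef] at hxT
      obtain ⟨⟨i, j, b⟩, hpmem, rfl⟩ := Finset.mem_image.mp hxT
      rw [hmemP] at hpmem
      obtain ⟨hiS, hj⟩ := hpmem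
      obtain ⟨⟨hi1, hid⟩, hqi⟩ := RevBCH.mem_S.mp hiS
      refine ⟨i, ⟨hi1, hid⟩, ?_⟩
      cases b
      · exact Or.inr ⟨i * q ^ j % n, ⟨j, rfl⟩, rfl⟩
      · exact Or.inl ⟨j, rfl⟩
  -- cardinality
  have hcardT : T.card = (d - d / q) * (m * 2) := by
    rw [hTdef, Finset.card_image_of_injOn hginj, hPdef, Finset.card_product,
      Finset.card_product, Finset.card_range, Finset.card_univ, Fintype.card_bool,
      RevBCH.card_S hq0]
  have main : ({0} ∪ ⋃ i ∈ Set.Icc 1 d,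
      (cosetC q n i ∪ (n - ·) '' cosetC q n i)).ncard
      = 1 + 2 * m * ((d * (q - 1) + q - 1) / q) := by
    rw [hsetEq, Set.ncard_coe_finset, Finset.card_insert_of_notMem h0T, hcardT,
      ← RevBCH.div_arith hq3]
    generalize (d - d / q) = X
    ring
  refine ⟨main, ?_⟩
  rw [main]
  generalize 2 * m * ((d * (q - 1) + q - 1) / q) = K
  omega
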